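/- For every real n > 1, the negative fixed point x* of f_n (i.e., the unique x < 0 with (1-x)^(-n) - 1 = x) satisfies -1 < x* < 0, and f_n(x) < x for x ∈ (x*, 0) while f_n(x) > x for x < x*. -/

import Mathlib

noncomputable def polu (n : ℝ) (x : ℝ) : ℝ :=
  if 0 ≤ x then x else (1 - x) ^ (-n) - 1

theorem polu_fixed_point_props (n : ℝ) (hn : 1 < n) (xs : ℝ)
    (hxs : xs < 0) (hfix : (1 - xs) ^ (-n) - 1 = xs) :
    -1 < xs ∧
    (∀ x : ℝ, xs < x → x < 0 → polu n x < x) ∧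
    (∀ x : ℝ, x < xs → polu n x > x) := by
  have hnpos : (0:ℝ) < 1 + n := by linarith
  set x0 : ℝ := (1 - n) / (1 + n) with hx0def
  have hx0neg : x0 < 0 := div_neg_of_neg_of_pos (by linarith) hnpos
  have hx0gt : (-1:ℝ) < x0 := by
    rw [hx0def, lt_div_iff₀ hnpos]; linarith
  set ψ : ℝ → ℝ := fun x => (1 + x) * (1 - x) ^ n with hψdef
  -- derivative of ψ
  have hderiv : ∀ x : ℝ, x < 1 →
      HasDerivAt ψ ((1 - x) ^ (n - 1) * ((1 - n) - (1 + n) * x)) x := by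
    intro x hx
    have hpos : 0 < 1 - x := by linarith
    have h1 : HasDerivAt (fun x : ℝ => 1 - x) (-1) x := by
      exact (hasDerivAt_id' x).const_sub 1
    have h2 : HasDerivAt (fun x : ℝ => (1 - x) ^ n)
        (n * (1 - x) ^ (n - 1) * (-1)) x :=
      (Real.hasDerivAt_rpow_const (Or.inl hpos.ne')).comp x h1
    have h3 : HasDerivAt (fun x : ℝ => 1 + x) 1 x := by
      exact (hasDerivAt_id' x).const_add 1
    have h4 := h3.mul h2
    have heq : 1 * (1 - x) ^ n + (1 + x) * (n * (1 - x) ^ (n - 1) * (-1))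
        = (1 - x) ^ (n - 1) * ((1 - n) - (1 + n) * x) := by
      have h5 : (1 - x) ^ (n - 1) * (1 - x) = (1 - x) ^ n := by
        rw [← Real.rpow_add_one hpos.ne']
        congr 1; ring
      rw [← h5]; ring
    rw [heq] at h4
    exact h4
  have hcont : ∀ x : ℝ, x < 1 → ContinuousAt ψ x := fun x hx =>
    (hderiv x hx).continuousAt
  -- strict mono on Icc (-1) x0
  have hmono : StrictMonoOn ψ (Set.Icc (-1) x0) := by
    apply strictMonoOn_of_deriv_pos (convex_Icc _ _)
    · intro x hx
      exact (hcont x (by linarith [hx.2])).continuousWithinAt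
    · intro x hx
      rw [interior_Icc] at hx
      have hx1 : x < 1 := by linarith [hx.2]
      rw [(hderiv x hx1).deriv]
      have h1 : 0 < (1 - x) ^ (n - 1) := Real.rpow_pos_of_pos (by linarith) _
      have h2 := (lt_div_iff₀ hnpos).mp hx.2
      have h3 : 0 < (1 - n) - (1 + n) * x := by nlinarith
      positivity
  -- strict anti on Icc x0 0
  have hanti : StrictAntiOn ψ (Set.Icc x0 0) := by
    apply strictAntiOn_of_deriv_neg (convex_Icc _ _)
    · intro x hx
      exact (hcont x (by linarith [hx.2])).continuousWithinAt
    · intro x hx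
      rw [interior_Icc] at hx
      have hx1 : x < 1 := by linarith [hx.2]
      rw [(hderiv x hx1).deriv]
      have h1 : 0 < (1 - x) ^ (n - 1) := Real.rpow_pos_of_pos (by linarith) _
      have h2 := (div_lt_iff₀ hnpos).mp hx.1
      have h3 : (1 - n) - (1 + n) * x < 0 := by nlinarith
      exact mul_neg_of_pos_of_neg h1 h3
  have hψ0 : ψ 0 = 1 := by simp [hψdef]
  have hxspos : 0 < 1 - xs := by linarith
  have hA : (1 - xs) ^ (-n) = 1 + xs := by linarith
  have hApos : 0 < (1 - xs) ^ (-n) := Real.rpow_pos_of_pos hxspos _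
  have hxsgt : -1 < xs := by linarith
  have hψxs : ψ xs = 1 := by
    rw [hψdef]
    simp only
    rw [← hA, ← Real.rpow_add hxspos]
    simp
  -- xs < x0
  have hxslt : xs < x0 := by
    by_contra h
    push_neg at h
    have := hanti ⟨h, hxs.le⟩ ⟨hx0neg.le, le_refl 0⟩ hxs
    rw [hψxs, hψ0] at this
    exact lt_irrefl 1 this
  refine ⟨hxsgt, ?_, ?_⟩
  · -- xs < x < 0 : polu n x < x
    intro x hx1 hx2
    have hxgt : -1 < x := lt_trans hxsgt hx1
    have hψx : 1 < ψ x := by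
      rcases le_or_gt x x0 with h | h
      · have := hmono ⟨hxsgt.le, hxslt.le⟩ ⟨hxgt.le, h⟩ hx1
        rwa [hψxs] at this
      · have := hanti ⟨h.le, hx2.le⟩ ⟨hx0neg.le, le_refl 0⟩ hx2
        rwa [hψ0] at this
    have hxpos : 0 < 1 - x := by linarith
    have hP : 0 < (1 - x) ^ n := Real.rpow_pos_of_pos hxpos _
    have key : (1 - x) ^ (-n) * (1 - x) ^ n = 1 := by
      rw [← Real.rpow_add hxpos]; simp
    rw [polu, if_neg (not_le.mpr hx2)]
    have hψx' : 1 < (1 + x) * (1 - x) ^ n := hψx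
    nlinarith [hψx', hP, key]
  · -- x < xs : polu n x > x
    intro x hx1
    have hx2 : x < 0 := lt_trans hx1 hxs
    rw [polu, if_neg (not_le.mpr hx2)]
    have hxpos : 0 < 1 - x := by linarith
    have hApos' : 0 < (1 - x) ^ (-n) := Real.rpow_pos_of_pos hxpos _
    rcases le_or_gt x (-1) with h | h
    · linarith
    · have hψx : ψ x < 1 := by
        have := hmono ⟨h.le, by linarith⟩ ⟨hxsgt.le, hxslt.le⟩ hx1
        rwa [hψxs] at this
      have hP : 0 < (1 - x) ^ n := Real.rpow_pos_of_pos hxpos _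
      have key : (1 - x) ^ (-n) * (1 - x) ^ n = 1 := by
        rw [← Real.rpow_add hxpos]; simp
      have hψx' : (1 + x) * (1 - x) ^ n < 1 := hψx
      nlinarith [hψx', hP, key]
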